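/- Let G be a simple graph on a finite vertex set V, let k, u : V → ℕ, and define k' : V → ℕ by k'(v) = u(N[v]) ∸ k(v) (truncated subtraction in ℕ). If f is a (k,u)-packing function of G, then the function g : V → ℕ defined by g(v) = u(v) − f(v) is a (k',u)-dominating function of G, and g(V) = u(V) − f(V). -/
import Mathlib

open Classical Finset

/-- The closed neighborhood `N[v]` of `v` in `G`, as a finset. -/
noncomputable def closedNbhd {V : Type*} [Fintype V] (G : SimpleGraph V) (v : V) : Finset V :=
  Finset.univ.filter (fun w => G.Adj v w ∨ w = v)

lemma mem_closedNbhd_self {V : Type*} [Fintype V] (G : SimpleGraph V) (v : V) :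
    v ∈ closedNbhd G v := by simp [closedNbhd]

/-- `f` is a `(k,u)`-dominating function of `G`. -/
def IsDomFn {V : Type*} [Fintype V] (G : SimpleGraph V) (k u f : V → ℕ) : Prop :=
  ∀ v, f v ≤ u v ∧ k v ≤ ∑ w ∈ closedNbhd G v, f w

/-- `f` is a `(k,u)`-packing function of `G`. -/
def IsPackFn {V : Type*} [Fintype V] (G : SimpleGraph V) (k u f : V → ℕ) : Prop :=
  ∀ v, f v ≤ u v ∧ ∑ w ∈ closedNbhd G v, f w ≤ k v

/-- `γ_{k,u}(G)`: minimum weight of a `(k,u)`-dominating function. -/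
noncomputable def gammaKU {V : Type*} [Fintype V] (G : SimpleGraph V) (k u : V → ℕ) : ℕ :=
  sInf {s | ∃ f, IsDomFn G k u f ∧ s = ∑ v, f v}

/-- `L_{k,u}(G)`: maximum weight of a `(k,u)`-packing function. -/
noncomputable def LKU {V : Type*} [Fintype V] (G : SimpleGraph V) (k u : V → ℕ) : ℕ :=
  sSup {s | ∃ f, IsPackFn G k u f ∧ s = ∑ v, f v}

/-- if `f` is a `(k,u)`-packing function, then `g = u - f` is a
`(k',u)`-dominating function where `k'(v) = u(N[v]) ∸ k(v)`, and `g(V) = u(V) - f(V)`. -/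
theorem stmt_2 {V : Type*} [Fintype V] (G : SimpleGraph V) (k u f : V → ℕ)
    (hf : IsPackFn G k u f) :
    IsDomFn G (fun v => (∑ w ∈ closedNbhd G v, u w) - k v) u (fun v => u v - f v) ∧
      (∑ v, (u v - f v)) = (∑ v, u v) - ∑ v, f v := by
  have hsub : ∀ (s : Finset V), ∑ w ∈ s, (u w - f w) = (∑ w ∈ s, u w) - ∑ w ∈ s, f w := by
    intro s
    rw [eq_tsub_iff_add_eq_of_le (Finset.sum_le_sum fun w _ => (hf w).1), ← Finset.sum_add_distrib]
    exact Finset.sum_congr rfl fun w _ => Nat.sub_add_cancel (hf w).1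
  refine ⟨fun v => ⟨Nat.sub_le _ _, ?_⟩, hsub _⟩
  rw [hsub]
  exact Nat.sub_le_sub_left (hf v).2 _
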